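/- (Bradley's q-analog of Hoffman's identity) Let 0 < q < 1, N a positive integer, k = (k_1,...,k_r) an index with Hoffman dual k^∨ = (l_1,...,l_s). Then ∑_{1 ≤ m_1 ≤ ... ≤ m_r ≤ N} q^{(k_1-1)m_1 + ... + (k_r-1)m_r} / ([m_1]_q^{k_1} ··· [m_r]_q^{k_r}) · (-1)^{m_r-1} q^{m_r(m_r+1)/2} C_q(N, m_r) = ∑_{1 ≤ n_1 ≤ ... ≤ n_s ≤ N} q^{n_1 + ... + n_s} / ([n_1]_q^{l_1} ··· [n_s]_q^{l_s}). -/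

import Mathlib

noncomputable def qint (q : ℝ) (m : ℕ) : ℝ := (1 - q ^ m) / (1 - q)

noncomputable def qfact (q : ℝ) (m : ℕ) : ℝ := ∏ a ∈ Finset.Icc 1 m, qint q a

noncomputable def qbinom (q : ℝ) (N m : ℕ) : ℝ := qfact q N / (qfact q m * qfact q (N - m))

/-- Weakly increasing tuples `1 ≤ m 0 ≤ ⋯ ≤ m (r-1) ≤ N`. -/
def wchains (r N : ℕ) : Finset (Fin r → ℕ) :=
  (Fintype.piFinset fun _ => Finset.Icc 1 N).filter fun m => ∀ i j : Fin r, i ≤ j → m i ≤ m j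

/-- The set of partial sums `k_1, k_1+k_2, …, k_1+⋯+k_{r-1}` of a list. -/
def psums (k : List ℕ) : Finset ℕ :=
  ((List.range (k.length - 1)).map (fun j => (k.take (j + 1)).sum)).toFinset

/-- `l` is the Hoffman dual of the index `k`. -/
def IsHoffmanDual (k l : List ℕ) : Prop :=
  k ≠ [] ∧ l ≠ [] ∧ (∀ x ∈ k, 0 < x) ∧ (∀ x ∈ l, 0 < x) ∧ k.sum = l.sum ∧
    psums l = Finset.Icc 1 (k.sum - 1) \ psums k

/-- The multiple harmonic q-sum `H_N^⋆(k;q)`. -/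
noncomputable def qHstar (q : ℝ) (N : ℕ) (k : List ℕ) : ℝ :=
  if h : 0 < k.length then
    ∑ m ∈ wchains k.length N,
      (∏ i : Fin k.length, q ^ ((k.get i - 1) * m i) / (qint q (m i)) ^ k.get i) *
        ((-1 : ℝ) ^ (m ⟨k.length - 1, by omega⟩ - 1) *
          q ^ (m ⟨k.length - 1, by omega⟩ * (m ⟨k.length - 1, by omega⟩ + 1) / 2) *
            qbinom q N (m ⟨k.length - 1, by omega⟩))
  else 1

/-- The multiple harmonic q-sum `z_N^⋆(l;q)`. -/
noncomputable def qzetaStar (q : ℝ) (N : ℕ) (l : List ℕ) : ℝ :=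
  ∑ m ∈ wchains l.length N, ∏ j : Fin l.length, q ^ (m j) / (qint q (m j)) ^ l.get j

open Finset

section BradleyAux

variable (q : ℝ) (N : ℕ)

lemma qint_pos (hq0 : 0 < q) (hq1 : q < 1) {n : ℕ} (hn : 1 ≤ n) : 0 < qint q n := by
  have h1 : q ^ n < 1 := pow_lt_one₀ hq0.le hq1 (by omega)
  exact div_pos (by linarith) (by linarith)

lemma qint_ne (hq0 : 0 < q) (hq1 : q < 1) {n : ℕ} (hn : 1 ≤ n) : qint q n ≠ 0 :=
  (qint_pos q hq0 hq1 hn).ne'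

lemma qfact_pos (hq0 : 0 < q) (hq1 : q < 1) (n : ℕ) : 0 < qfact q n := by
  refine Finset.prod_pos fun a ha => qint_pos q hq0 hq1 ?_
  exact (Finset.mem_Icc.1 ha).1

lemma qfact_ne (hq0 : 0 < q) (hq1 : q < 1) (n : ℕ) : qfact q n ≠ 0 :=
  (qfact_pos q hq0 hq1 n).ne'

lemma qfact_zero : qfact q 0 = 1 := by simp [qfact]

lemma qfact_succ (n : ℕ) : qfact q (n + 1) = qfact q n * qint q (n + 1) :=
  Finset.prod_Icc_succ_top (by omega) _

lemma qint_one' (hq1 : q < 1) : qint q 1 = 1 := by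
  rw [qint, pow_one, div_self (by linarith)]

lemma qint_add (a b : ℕ) : qint q (a + b) = qint q a + q ^ a * qint q b := by
  have h : 1 - q ^ (a + b) = (1 - q ^ a) + q ^ a * (1 - q ^ b) := by rw [pow_add]; ring
  rw [qint, qint, qint, h, add_div, mul_div_assoc]

lemma qint_diff (a s : ℕ) :
    q ^ a * qint q (a + s) - q ^ (a + s) * qint q a = q ^ a * qint q s := by
  have h : q ^ a * (1 - q ^ (a + s)) - q ^ (a + s) * (1 - q ^ a) = q ^ a * (1 - q ^ s) := by
    rw [pow_add]; ring
  rw [qint, qint, qint, ← mul_div_assoc, ← mul_div_assoc, ← mul_div_assoc, div_sub_div_same, h]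

lemma qbinom_eq (a b : ℕ) : qbinom q (a + b) a = qfact q (a + b) / (qfact q a * qfact q b) := by
  rw [qbinom, Nat.add_sub_cancel_left]

lemma tri (μ : ℕ) : (μ + 2) * (μ + 1) / 2 = (μ + 1) * μ / 2 + (μ + 1) := by
  obtain ⟨c, hc⟩ := Nat.even_mul_succ_self μ
  have h1 : (μ + 1) * μ = c + c := by rw [mul_comm]; omega
  have h2 : (μ + 2) * (μ + 1) = (μ + 1) * μ + 2 * (μ + 1) := by ring
  omega

/-- The connector. -/
noncomputable def Cc (m n : ℕ) : ℝ :=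
  if m ≤ n then (-1 : ℝ) ^ (m - 1) * q ^ (m * (m - 1) / 2 + n) * qbinom q (n - 1) (m - 1)
  else 0

noncomputable def Abdy (x : ℕ) : ℝ := (-1 : ℝ) ^ (x - 1) * q ^ (x * (x + 1) / 2) * qbinom q N x

lemma Cc_one (hq0 : 0 < q) (hq1 : q < 1) {n : ℕ} (hn : 1 ≤ n) : Cc q 1 n = q ^ n := by
  rw [Cc, if_pos hn]
  simp [qbinom, qfact_zero, div_self (qfact_ne q hq0 hq1 (n - 1))]

lemma Cc_zero {m n : ℕ} (h : n < m) : Cc q m n = 0 := by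
  rw [Cc, if_neg (by omega)]

lemma E1 (hq0 : 0 < q) (hq1 : q < 1) (m n : ℕ) (hm : 1 ≤ m) :
    qint q m * (Cc q m n - Cc q (m + 1) n) = qint q n * Cc q m n := by
  rcases lt_trichotomy n m with hlt | rfl | hgt
  · rw [Cc_zero q hlt, Cc_zero q (by omega)]; ring
  · rw [show Cc q (n + 1) n = 0 from Cc_zero q (by omega)]; ring
  · obtain ⟨μ, rfl⟩ : ∃ μ, m = μ + 1 := ⟨m - 1, by omega⟩
    obtain ⟨t, rfl⟩ : ∃ t, n = μ + 1 + t + 1 := ⟨n - μ - 2, by omega⟩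
    rw [Cc, if_pos (by omega), Cc, if_pos (by omega)]
    have h1 : (μ + 1 + t + 1 - 1 : ℕ) = μ + (t + 1) := by omega
    have h2 : (μ + 1 - 1 : ℕ) = μ := by omega
    have h3 : (μ + 1 + 1 - 1 : ℕ) = μ + 1 := by omega
    rw [h1, h2, h3]
    have h5 : (μ + 1 + 1) * (μ + 1) / 2 + (μ + 1 + t + 1)
        = ((μ + 1) * μ / 2 + (μ + 1 + t + 1)) + (μ + 1) := by
      have h := tri μ
      have h' : (μ + 1 + 1) = μ + 2 := rfl
      rw [h', h]; omega
    rw [h5, qbinom_eq]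
    have h6 : (μ + (t + 1) : ℕ) = (μ + 1) + t := by omega
    rw [h6, qbinom_eq]
    have hμ := qfact_ne q hq0 hq1 μ
    have ht := qfact_ne q hq0 hq1 t
    have hμ1 := qfact_ne q hq0 hq1 (μ + 1)
    have ht1 := qfact_ne q hq0 hq1 (t + 1)
    have hIμ1 : qint q (μ + 1) ≠ 0 := qint_ne q hq0 hq1 (by omega)
    have hIt1 : qint q (t + 1) ≠ 0 := qint_ne q hq0 hq1 (by omega)
    have e1 : qfact q (μ + 1) = qfact q μ * qint q (μ + 1) := qfact_succ q μ
    have e2 : qfact q (t + 1) = qfact q t * qint q (t + 1) := qfact_succ q t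
    have e3 : qint q (μ + 1 + t + 1) = qint q (μ + 1) + q ^ (μ + 1) * qint q (t + 1) := by
      have : (μ + 1 + t + 1 : ℕ) = (μ + 1) + (t + 1) := by omega
      rw [this, qint_add]
    have e4 : ((μ + 1) + t : ℕ) = μ + (t + 1) := by omega
    rw [pow_add _ _ (μ + 1), pow_succ, e3, e4, e1, e2]
    field_simp
    ring

lemma E2 (hq0 : 0 < q) (hq1 : q < 1) (m n : ℕ) (hm : 1 ≤ m) (hn : 1 ≤ n) :
    Cc q m (n + 1) * (q ^ m * qint q (n + 1) - q ^ (n + 1) * qint q m)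
      = q ^ (m + 1) * qint q n * Cc q m n := by
  rcases le_or_gt m n with hle | hgt
  · obtain ⟨μ, rfl⟩ : ∃ μ, m = μ + 1 := ⟨m - 1, by omega⟩
    obtain ⟨t, rfl⟩ : ∃ t, n = μ + 1 + t := ⟨n - μ - 1, by omega⟩
    rw [Cc, if_pos (by omega), Cc, if_pos (by omega)]
    have h1 : (μ + 1 + t + 1 - 1 : ℕ) = μ + (t + 1) := by omega
    have h2 : (μ + 1 - 1 : ℕ) = μ := by omega
    have h3 : (μ + 1 + t - 1 : ℕ) = μ + t := by omega
    rw [h1, h2, h3, qbinom_eq]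
    rw [show qbinom q (μ + t) μ = qfact q (μ + t) / (qfact q μ * qfact q t) from qbinom_eq q μ t]
    have hd : q ^ (μ + 1) * qint q (μ + 1 + t + 1) - q ^ (μ + 1 + t + 1) * qint q (μ + 1)
        = q ^ (μ + 1) * qint q (t + 1) := by
      have := qint_diff q (μ + 1) (t + 1)
      have e : (μ + 1 + (t + 1) : ℕ) = μ + 1 + t + 1 := by omega
      rw [e] at this; exact this
    rw [hd]
    have hμ := qfact_ne q hq0 hq1 μ
    have ht := qfact_ne q hq0 hq1 t
    have hIt1 : qint q (t + 1) ≠ 0 := qint_ne q hq0 hq1 (by omega)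
    have hImt1 : qint q (μ + 1 + t) ≠ 0 := qint_ne q hq0 hq1 (by omega)
    have e1 : qfact q (t + 1) = qfact q t * qint q (t + 1) := qfact_succ q t
    have e2 : qfact q (μ + (t + 1)) = qfact q (μ + t) * qint q (μ + 1 + t) := by
      have e : (μ + (t + 1) : ℕ) = (μ + t) + 1 := by omega
      rw [e, qfact_succ]
      have e' : (μ + t + 1 : ℕ) = μ + 1 + t := by omega
      rw [e']
    rw [e1, e2]
    have he : (μ + 1) * μ / 2 + (μ + 1 + t + 1) = ((μ + 1) * μ / 2 + (μ + 1 + t)) + 1 := by omega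
    rw [he, pow_succ]
    field_simp
    ring
  · rcases Nat.eq_or_lt_of_le hgt with heq | hlt
    · -- m = n + 1
      subst heq
      simp only [Nat.succ_eq_add_one]
      rw [show Cc q (n + 1) n = 0 from Cc_zero q (by omega)]
      rw [sub_self, mul_zero, mul_zero]
    · rw [Cc_zero q (by omega), Cc_zero q (by omega)]; ring

lemma E3 (hq0 : 0 < q) (hq1 : q < 1) (m : ℕ) (hm : 1 ≤ m) (hmN : m ≤ N) :
    q ^ N * qint q m * Abdy q N m = q ^ m * qint q N * Cc q m N := by
  obtain ⟨μ, rfl⟩ : ∃ μ, m = μ + 1 := ⟨m - 1, by omega⟩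
  obtain ⟨t, rfl⟩ : ∃ t, N = μ + 1 + t := ⟨N - μ - 1, by omega⟩
  rw [Abdy, Cc, if_pos (by omega)]
  have h2 : (μ + 1 - 1 : ℕ) = μ := by omega
  have h3 : (μ + 1 + t - 1 : ℕ) = μ + t := by omega
  rw [h2, h3]
  rw [show qbinom q (μ + t) μ = qfact q (μ + t) / (qfact q μ * qfact q t) from qbinom_eq q μ t]
  rw [show (μ + 1 + t : ℕ) = (μ + 1) + t from by omega,
    show qbinom q ((μ + 1) + t) (μ + 1) = qfact q ((μ + 1) + t) / (qfact q (μ + 1) * qfact q t)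
      from qbinom_eq q (μ + 1) t]
  have hμ := qfact_ne q hq0 hq1 μ
  have ht := qfact_ne q hq0 hq1 t
  have hIμ1 : qint q (μ + 1) ≠ 0 := qint_ne q hq0 hq1 (by omega)
  have hImt1 : qint q (μ + 1 + t) ≠ 0 := qint_ne q hq0 hq1 (by omega)
  have e1 : qfact q (μ + 1) = qfact q μ * qint q (μ + 1) := qfact_succ q μ
  have e2 : qfact q ((μ + 1) + t) = qfact q (μ + t) * qint q (μ + 1 + t) := by
    have e : ((μ + 1) + t : ℕ) = (μ + t) + 1 := by omega
    rw [e, qfact_succ]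
  rw [e1, e2]
  have he : (μ + 1) * (μ + 1 + 1) / 2 = (μ + 1) * μ / 2 + (μ + 1) := by
    have h := tri μ
    have h1 : (μ + 1) * (μ + 1 + 1) = (μ + 2) * (μ + 1) := by ring
    omega
  rw [he]
  have he2 : (μ + 1) * μ / 2 + (μ + 1) = (μ + 1) * μ / 2 + (μ + 1) := rfl
  rw [pow_add, pow_add]
  field_simp
  ring

lemma L1 (hq0 : 0 < q) (hq1 : q < 1) {n : ℕ} (hn1 : 1 ≤ n) (hnN : n ≤ N) :
    ∀ d m, 1 ≤ m → m + d = N →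
      (∑ x ∈ Icc m N, (1 / qint q x) * Cc q x n) = (1 / qint q n) * Cc q m n := by
  intro d
  induction d with
  | zero =>
    intro m hm hmN
    have hmN' : m = N := by omega
    subst hmN'
    rw [Finset.Icc_self, Finset.sum_singleton]
    rcases eq_or_lt_of_le hnN with rfl | hlt
    · rfl
    · rw [Cc_zero q hlt]; ring
  | succ d ih =>
    intro m hm hmN
    rw [Finset.Icc_eq_cons_Ioc (by omega : m ≤ N), Finset.sum_cons, ← Finset.Icc_add_one_left_eq_Ioc]
    rw [ih (m + 1) (by omega) (by omega)]
    have h := E1 q hq0 hq1 m n (by omega)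
    have hIm := qint_ne q hq0 hq1 (show 1 ≤ m by omega)
    have hIn := qint_ne q hq0 hq1 hn1
    field_simp
    linear_combination -h

lemma L2 (hq0 : 0 < q) (hq1 : q < 1) (m : ℕ) (hm : 1 ≤ m) :
    ∀ n, 1 ≤ n → n ≤ N →
      q ^ n * qint q m * (∑ x ∈ Icc 1 n, Cc q m x) = q ^ m * qint q n * Cc q m n := by
  intro n
  induction n with
  | zero => intro h1 _; omega
  | succ n ih =>
    intro h1 hN
    rcases Nat.eq_zero_or_pos n with rfl | hn
    · simp only [Nat.zero_add]
      rw [Finset.Icc_self, Finset.sum_singleton, qint_one' q hq1]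
      rcases eq_or_lt_of_le hm with rfl | hlt
      · rw [qint_one' q hq1]
      · rw [Cc_zero q hlt]; ring
    · rw [Finset.sum_Icc_succ_top (by omega)]
      have ihh := ih hn (by omega)
      have h2 := E2 q hq0 hq1 m n hm hn
      linear_combination q * ihh - h2

lemma L3 (hq0 : 0 < q) (hq1 : q < 1) (m : ℕ) (hm : 1 ≤ m) (hmN : m ≤ N) :
    (∑ n ∈ Icc 1 N, Cc q m n) = Abdy q N m := by
  have hN : 1 ≤ N := le_trans hm hmN
  have h2 := L2 q N hq0 hq1 m hm N hN (le_refl N)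
  have h3 := E3 q N hq0 hq1 m hm hmN
  have h4 : q ^ N * qint q m * (∑ n ∈ Icc 1 N, Cc q m n)
      = q ^ N * qint q m * Abdy q N m := by
    rw [h2, ← h3]
  exact mul_left_cancel₀
    (mul_ne_zero (pow_ne_zero _ hq0.ne') (qint_ne q hq0 hq1 hm)) h4

lemma tswap (F : ℕ → ℕ → ℝ) :
    ∑ n ∈ Icc 1 N, ∑ x ∈ Icc 1 n, F n x = ∑ x ∈ Icc 1 N, ∑ n ∈ Icc x N, F n x := by
  have h1 : ∀ n ∈ Icc 1 N, (∑ x ∈ Icc 1 n, F n x)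
      = ∑ x ∈ Icc 1 N, if x ≤ n then F n x else 0 := by
    intro n hn
    simp only [Finset.mem_Icc] at hn
    rw [← Finset.sum_filter]
    apply Finset.sum_congr _ fun _ _ => rfl
    ext x
    simp only [Finset.mem_filter, Finset.mem_Icc]
    omega
  rw [Finset.sum_congr rfl h1, Finset.sum_comm]
  refine Finset.sum_congr rfl fun x hx => ?_
  simp only [Finset.mem_Icc] at hx
  rw [← Finset.sum_filter]
  apply Finset.sum_congr _ fun _ _ => rfl
  ext n
  simp only [Finset.mem_filter, Finset.mem_Icc]
  omega

/-- The transfer operator. -/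
noncomputable def Trf (g : ℕ → ℝ) (m : ℕ) : ℝ := ∑ n ∈ Icc 1 N, Cc q m n * g n

noncomputable def SB (h : ℕ → ℝ) (n : ℕ) : ℝ := ∑ x ∈ Icc n N, (q ^ x / qint q x) * h x

noncomputable def nst (N : ℕ) (u : ℕ → ℕ → ℝ) : List ℕ → (ℕ → ℝ) → ℕ → ℝ
  | [] => fun f m => f m
  | j :: ks => fun f m => ∑ x ∈ Icc m N, u j x * nst N u ks f x

noncomputable def Mf : List ℕ → (ℕ → ℝ) → ℕ → ℝ
  | [] => fun g => g
  | j :: ks => fun g n => (1 / qint q n) * ((SB q N)^[j - 1] (Mf ks g) n)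

lemma O1 (hq0 : 0 < q) (hq1 : q < 1) (g : ℕ → ℝ) {m : ℕ} (hm : 1 ≤ m) (hmN : m ≤ N) :
    ∑ x ∈ Icc m N, (1 / qint q x) * Trf q N g x
      = Trf q N (fun n => (1 / qint q n) * g n) m := by
  simp only [Trf, Finset.mul_sum]
  rw [Finset.sum_comm]
  refine Finset.sum_congr rfl fun n hn => ?_
  simp only [Finset.mem_Icc] at hn
  have hL := L1 q N hq0 hq1 hn.1 hn.2 (N - m) m hm (by omega)
  calc ∑ x ∈ Icc m N, 1 / qint q x * (Cc q x n * g n)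
      = (∑ x ∈ Icc m N, 1 / qint q x * Cc q x n) * g n := by
        rw [Finset.sum_mul]; exact Finset.sum_congr rfl fun _ _ => by ring
    _ = Cc q m n * (1 / qint q n * g n) := by rw [hL]; ring

lemma O2 (hq0 : 0 < q) (hq1 : q < 1) (g : ℕ → ℝ) {m : ℕ} (hm : 1 ≤ m) (hmN : m ≤ N) :
    (q ^ m / qint q m) * Trf q N g m = Trf q N (SB q N g) m := by
  simp only [Trf, Finset.mul_sum, SB]
  have key : ∀ n ∈ Icc 1 N, q ^ m / qint q m * (Cc q m n * g n)
      = ∑ x ∈ Icc 1 n, q ^ n / qint q n * Cc q m x * g n := by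
    intro n hn
    simp only [Finset.mem_Icc] at hn
    have h2 := L2 q N hq0 hq1 m hm n hn.1 hn.2
    have e : ∑ x ∈ Icc 1 n, q ^ n / qint q n * Cc q m x * g n
        = q ^ n / qint q n * (∑ x ∈ Icc 1 n, Cc q m x) * g n := by
      rw [Finset.mul_sum, Finset.sum_mul]
    rw [e]
    have hIm := qint_ne q hq0 hq1 hm
    have hIn := qint_ne q hq0 hq1 hn.1
    field_simp
    linear_combination (-(g n)) * h2
  rw [Finset.sum_congr rfl key]
  rw [tswap N (fun n x => q ^ n / qint q n * Cc q m x * g n)]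
  refine Finset.sum_congr rfl fun x hx => ?_
  exact Finset.sum_congr rfl fun n _ => by ring

lemma O2it (hq0 : 0 < q) (hq1 : q < 1) (g : ℕ → ℝ) {m : ℕ} (hm : 1 ≤ m) (hmN : m ≤ N)
    (t : ℕ) : (q ^ m / qint q m) ^ t * Trf q N g m = Trf q N ((SB q N)^[t] g) m := by
  induction t with
  | zero => simp
  | succ t ih =>
    calc (q ^ m / qint q m) ^ (t + 1) * Trf q N g m
        = (q ^ m / qint q m) * ((q ^ m / qint q m) ^ t * Trf q N g m) := by ring
      _ = (q ^ m / qint q m) * Trf q N ((SB q N)^[t] g) m := by rw [ih]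
      _ = Trf q N (SB q N ((SB q N)^[t] g)) m := O2 q N hq0 hq1 _ hm hmN
      _ = Trf q N ((SB q N)^[t + 1] g) m := by rw [Function.iterate_succ_apply']

noncomputable def uH (j x : ℕ) : ℝ := q ^ ((j - 1) * x) / qint q x ^ j

noncomputable def uZ (j x : ℕ) : ℝ := q ^ x / qint q x ^ j

lemma uH_eq (hq0 : 0 < q) (hq1 : q < 1) {j : ℕ} (hj : 1 ≤ j) (x : ℕ) :
    uH q j x = (1 / qint q x) * (q ^ x / qint q x) ^ (j - 1) := by
  obtain ⟨j', rfl⟩ : ∃ j', j = j' + 1 := ⟨j - 1, by omega⟩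
  rw [uH]
  have h1 : (j' + 1 - 1 : ℕ) = j' := by omega
  rw [h1, div_pow, ← pow_mul, pow_succ, mul_comm x j']
  ring

lemma C1 (hq0 : 0 < q) (hq1 : q < 1) :
    ∀ (k : List ℕ), (∀ j ∈ k, 0 < j) → ∀ g m, 1 ≤ m → m ≤ N →
      nst N (uH q) k (Trf q N g) m = Trf q N (Mf q N k g) m := by
  intro k
  induction k with
  | nil => intro _ g m _ _; rfl
  | cons j ks ih =>
    intro hpos g m hm hmN
    have hj : 1 ≤ j := hpos j (by simp)
    show ∑ x ∈ Icc m N, uH q j x * nst N (uH q) ks (Trf q N g) x = _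
    have step : ∀ x ∈ Icc m N, uH q j x * nst N (uH q) ks (Trf q N g) x
        = (1 / qint q x) * Trf q N ((SB q N)^[j - 1] (Mf q N ks g)) x := by
      intro x hx
      simp only [Finset.mem_Icc] at hx
      have hx1 : 1 ≤ x := le_trans hm hx.1
      rw [ih (fun a ha => hpos a (by simp [ha])) g x hx1 hx.2]
      rw [uH_eq q hq0 hq1 hj, mul_assoc, O2it q N hq0 hq1 _ hx1 hx.2]
    rw [Finset.sum_congr rfl step, O1 q N hq0 hq1 _ hm hmN]
    rfl

lemma nst_congr (u : ℕ → ℕ → ℝ) :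
    ∀ (k : List ℕ) (f f' : ℕ → ℝ), (∀ x, 1 ≤ x → x ≤ N → f x = f' x) →
      ∀ m, 1 ≤ m → m ≤ N → nst N u k f m = nst N u k f' m := by
  intro k
  induction k with
  | nil => intro f f' h m hm hmN; exact h m hm hmN
  | cons j ks ih =>
    intro f f' h m hm hmN
    show ∑ x ∈ Icc m N, u j x * nst N u ks f x = ∑ x ∈ Icc m N, u j x * nst N u ks f' x
    refine Finset.sum_congr rfl fun x hx => ?_
    simp only [Finset.mem_Icc] at hx
    rw [ih f f' h x (le_trans hm hx.1) hx.2]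

def wch (a r : ℕ) : Finset (Fin r → ℕ) :=
  (Fintype.piFinset fun _ => Finset.Icc a N).filter fun m => ∀ i j : Fin r, i ≤ j → m i ≤ m j

lemma wchains_eq (r : ℕ) : wchains r N = wch N 1 r := rfl

lemma mem_wch {a r : ℕ} {m : Fin r → ℕ} :
    m ∈ wch N a r ↔ (∀ i, a ≤ m i ∧ m i ≤ N) ∧ ∀ i j : Fin r, i ≤ j → m i ≤ m j := by
  simp [wch, Fintype.mem_piFinset, Finset.mem_Icc, Finset.mem_filter]

lemma tail_mem_wch {a r : ℕ} {m : Fin (r + 1) → ℕ} (hm : m ∈ wch N a (r + 1)) :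
    Fin.tail m ∈ wch N (m 0) r := by
  rw [mem_wch] at hm ⊢
  constructor
  · intro i
    exact ⟨hm.2 0 i.succ (Fin.zero_le _), (hm.1 i.succ).2⟩
  · intro i j hij
    exact hm.2 i.succ j.succ (by rwa [Fin.succ_le_succ_iff])

lemma cons_mem_wch {a x r : ℕ} (hx : x ∈ Icc a N) {mt : Fin r → ℕ}
    (hmt : mt ∈ wch N x r) : Fin.cons x mt ∈ wch N a (r + 1) := by
  rw [mem_wch] at hmt ⊢
  simp only [Finset.mem_Icc] at hx
  constructor
  · intro i
    rcases Fin.eq_zero_or_eq_succ i with rfl | ⟨i', rfl⟩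
    · simpa using hx
    · simp only [Fin.cons_succ]
      have h := (hmt.1 i')
      exact ⟨le_trans hx.1 h.1, h.2⟩
  · intro i j hij
    rcases Fin.eq_zero_or_eq_succ i with rfl | ⟨i', rfl⟩
    · rcases Fin.eq_zero_or_eq_succ j with rfl | ⟨j', rfl⟩
      · exact le_refl _
      · simp only [Fin.cons_zero, Fin.cons_succ]
        exact (hmt.1 j').1
    · rcases Fin.eq_zero_or_eq_succ j with rfl | ⟨j', rfl⟩
      · exact absurd (Fin.le_zero_iff.mp hij) (Fin.succ_ne_zero i')
      · simp only [Fin.cons_succ]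
        exact hmt.2 i' j' (by rwa [← Fin.succ_le_succ_iff])

lemma wch_cons_sum (r a : ℕ) (F : (Fin (r + 1) → ℕ) → ℝ) :
    ∑ m ∈ wch N a (r + 1), F m = ∑ x ∈ Icc a N, ∑ mt ∈ wch N x r, F (Fin.cons x mt) := by
  rw [Finset.sum_sigma' (Icc a N) (fun x => wch N x r) (fun x mt => F (Fin.cons x mt))]
  refine Finset.sum_bij'
    (fun (m : Fin (r + 1) → ℕ) (_ : m ∈ wch N a (r + 1)) =>
      (⟨m 0, Fin.tail m⟩ : (_ : ℕ) × (Fin r → ℕ)))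
    (fun p _ => Fin.cons p.1 p.2) ?_ ?_ ?_ ?_ ?_
  · intro m hm
    rw [Finset.mem_sigma]
    have h := (mem_wch N).mp hm
    exact ⟨Finset.mem_Icc.mpr (h.1 0), tail_mem_wch N hm⟩
  · intro p hp
    rw [Finset.mem_sigma] at hp
    exact cons_mem_wch N hp.1 hp.2
  · intro m hm
    exact Fin.cons_self_tail m
  · intro p hp
    simp [Fin.tail_cons]
  · intro m hm
    rw [Fin.cons_self_tail]

lemma chain_nest (u : ℕ → ℕ → ℝ) (f : ℕ → ℝ) :
    ∀ (ks : List ℕ) (j a : ℕ),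
      (∑ m ∈ wch N a (ks.length + 1),
        (∏ i : Fin (ks.length + 1), u ((j :: ks).get i) (m i)) * f (m (Fin.last ks.length)))
      = nst N u (j :: ks) f a := by
  intro ks
  induction ks with
  | nil =>
    intro j a
    show (∑ m ∈ wch N a 1, (∏ i : Fin 1, u ([j].get i) (m i)) * f (m (Fin.last 0)))
        = ∑ x ∈ Icc a N, u j x * f x
    have hw : wch N a 1 = Fintype.piFinset fun _ : Fin 1 => Icc a N := by
      rw [wch]
      apply Finset.filter_true_of_mem
      intro m _ i j hij
      rw [Subsingleton.elim i j]
    rw [hw]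
    refine Finset.sum_bij' (fun (m : Fin 1 → ℕ) _ => m 0) (fun x _ => fun _ => x)
      ?_ ?_ ?_ ?_ ?_
    · intro m hm
      exact (Fintype.mem_piFinset.mp hm) 0
    · intro x hx
      exact Fintype.mem_piFinset.mpr fun _ => hx
    · intro m hm
      funext i
      rw [Subsingleton.elim i 0]
    · intro x hx
      rfl
    · intro m hm
      rw [Fin.prod_univ_one]
      rfl
  | cons c ks' ih =>
    intro j a
    show (∑ m ∈ wch N a (ks'.length + 1 + 1),
        (∏ i : Fin (ks'.length + 1 + 1), u ((j :: c :: ks').get i) (m i)) *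
          f (m (Fin.last (ks'.length + 1))))
      = ∑ x ∈ Icc a N, u j x * nst N u (c :: ks') f x
    rw [wch_cons_sum]
    refine Finset.sum_congr rfl fun x hx => ?_
    rw [← ih c x, Finset.mul_sum]
    refine Finset.sum_congr rfl fun mt hmt => ?_
    rw [Fin.prod_univ_succ]
    rw [show (Fin.last (ks'.length + 1)) = (Fin.last ks'.length).succ from (Fin.succ_last _).symm]
    simp only [Fin.cons_zero, Fin.cons_succ, List.get_cons_succ, List.get_cons_zero]
    have hget : ∀ (i : Fin (ks'.length + 1)), (j :: c :: ks').get i.succ = (c :: ks').get i :=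
      fun _ => rfl
    simp only [hget]
    ring

lemma qHstar_eq (j : ℕ) (ks : List ℕ) :
    qHstar q N (j :: ks) = nst N (uH q) (j :: ks) (Abdy q N) 1 := by
  rw [← chain_nest N (uH q) (Abdy q N) ks j 1]
  rw [qHstar, dif_pos (by simp)]
  rfl

lemma qzetaStar_eq (c : ℕ) (lt : List ℕ) :
    qzetaStar q N (c :: lt) = nst N (uZ q) (c :: lt) (fun _ => 1) 1 := by
  rw [← chain_nest N (uZ q) (fun _ => 1) lt c 1]
  rw [qzetaStar]
  exact Finset.sum_congr rfl fun m _ => (mul_one _).symm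

lemma psums_single (a : ℕ) : psums [a] = ∅ := by simp [psums]

lemma psums_cons (a : ℕ) (ks : List ℕ) (hks : ks ≠ []) :
    psums (a :: ks) = insert a ((psums ks).image (fun p => p + a)) := by
  have hlen : 1 ≤ ks.length := List.length_pos_iff.mpr hks
  ext x
  simp only [psums, List.mem_toFinset, List.mem_map, List.mem_range, Finset.mem_insert,
    Finset.mem_image, List.length_cons]
  constructor
  · rintro ⟨j, hj, rfl⟩
    rcases Nat.eq_zero_or_pos j with rfl | hjpos
    · left; simp
    · right
      obtain ⟨j', rfl⟩ : ∃ j', j = j' + 1 := ⟨j - 1, by omega⟩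
      refine ⟨(ks.take (j' + 1)).sum, ⟨j', by omega, rfl⟩, ?_⟩
      simp only [List.take_succ_cons, List.sum_cons]
      omega
  · rintro (rfl | ⟨r, ⟨j, hj, rfl⟩, rfl⟩)
    · exact ⟨0, by omega, by simp⟩
    · refine ⟨j + 1, by omega, ?_⟩
      simp only [List.take_succ_cons, List.sum_cons]
      omega

lemma psums_shift (a : ℕ) (ks : List ℕ) :
    psums ((a + 1) :: ks) = (psums (a :: ks)).image (fun p => p + 1) := by
  cases ks with
  | nil => simp [psums_single]
  | cons b ks' =>
    rw [psums_cons (a + 1) (b :: ks') (by simp), psums_cons a (b :: ks') (by simp),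
      Finset.image_insert, Finset.image_image]
    congr 1

lemma psums_pos {k : List ℕ} (hpos : ∀ x ∈ k, 0 < x) {p : ℕ} (hp : p ∈ psums k) : 1 ≤ p := by
  rcases k with _ | ⟨a, ks⟩
  · simp [psums] at hp
  · rcases eq_or_ne ks [] with rfl | hne
    · simp [psums_single] at hp
    · rw [psums_cons a ks hne] at hp
      simp only [Finset.mem_insert, Finset.mem_image] at hp
      have ha := hpos a (by simp)
      rcases hp with rfl | ⟨r, _, rfl⟩ <;> omega

lemma psums_ge_head {a : ℕ} {ks : List ℕ} {p : ℕ} (hp : p ∈ psums (a :: ks)) : a ≤ p := by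
  rcases eq_or_ne ks [] with rfl | hne
  · simp [psums_single] at hp
  · rw [psums_cons a ks hne] at hp
    simp only [Finset.mem_insert, Finset.mem_image] at hp
    rcases hp with rfl | ⟨r, _, rfl⟩ <;> omega

lemma Icc_shift {M : ℕ} (hM : 1 ≤ M) :
    Icc 1 M = insert 1 ((Icc 1 (M - 1)).image (fun p => p + 1)) := by
  ext x
  simp only [Finset.mem_Icc, Finset.mem_insert, Finset.mem_image]
  constructor
  · intro hx
    rcases eq_or_ne x 1 with rfl | hne
    · exact Or.inl rfl
    · exact Or.inr ⟨x - 1, by omega, by omega⟩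
  · rintro (rfl | ⟨p, hp, rfl⟩) <;> omega

lemma sum_pos' {l : List ℕ} (hne : l ≠ []) (hpos : ∀ x ∈ l, 0 < x) : 1 ≤ l.sum := by
  rcases l with _ | ⟨a, t⟩
  · exact absurd rfl hne
  · have := hpos a (by simp)
    simp only [List.sum_cons]
    omega

lemma add_one_inj : Function.Injective (fun p : ℕ => p + 1) := fun a b hab => by
  simpa using hab

lemma Hd_one {l : List ℕ} (h : IsHoffmanDual [1] l) : l = [1] := by
  obtain ⟨_, hl, _, hlp, hsum, _⟩ := h
  rcases l with _ | ⟨b, lt⟩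
  · exact absurd rfl hl
  · have hb := hlp b (by simp)
    rcases lt with _ | ⟨c, lt'⟩
    · simp only [List.sum_cons, List.sum_nil] at hsum
      have : b = 1 := by omega
      rw [this]
    · have hc := hlp c (by simp)
      simp only [List.sum_cons, List.sum_nil] at hsum
      omega

lemma Hd_big (j : ℕ) (ks : List ℕ) (l : List ℕ) (h : IsHoffmanDual ((j + 2) :: ks) l) :
    ∃ lt, l = 1 :: lt ∧ IsHoffmanDual ((j + 1) :: ks) lt := by
  obtain ⟨hk, hl, hkp, hlp, hsum, hps⟩ := h
  have hk1p : ∀ x ∈ (j + 1) :: ks, 0 < x := by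
    intro x hx
    rcases List.mem_cons.mp hx with rfl | hx
    · omega
    · exact hkp x (List.mem_cons_of_mem _ hx)
  have hw2 : ((j + 2) :: ks).sum = j + 2 + ks.sum := by simp [List.sum_cons]
  have h1l : 1 ∈ psums l := by
    rw [hps, Finset.mem_sdiff]
    constructor
    · rw [Finset.mem_Icc]; omega
    · intro hmem
      have := psums_ge_head hmem
      omega
  rcases l with _ | ⟨b, lt⟩
  · exact absurd rfl hl
  have hb1 : b = 1 := by
    rcases eq_or_ne lt [] with rfl | hne
    · simp [psums_single] at h1l
    · rw [psums_cons b lt hne] at h1l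
      simp only [Finset.mem_insert, Finset.mem_image] at h1l
      have hb := hlp b (by simp)
      rcases h1l with h1l | ⟨r, hr, hr1⟩
      · omega
      · have := psums_pos (fun x hx => hlp x (List.mem_cons_of_mem _ hx)) hr
        omega
  subst hb1
  have hlt_ne : lt ≠ [] := by
    intro hlt
    subst hlt
    simp only [List.sum_cons, List.sum_nil] at hsum
    omega
  have hsum' : ((j + 1) :: ks).sum = lt.sum := by
    simp only [List.sum_cons] at hsum ⊢
    omega
  refine ⟨lt, rfl, by simp, hlt_ne, hk1p, fun x hx => hlp x (List.mem_cons_of_mem _ hx),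
    hsum', ?_⟩
  have hshift : psums ((j + 2) :: ks) = (psums ((j + 1) :: ks)).image (fun p => p + 1) :=
    psums_shift (j + 1) ks
  have hnot1 : (1 : ℕ) ∉ (psums ((j + 1) :: ks)).image (fun p => p + 1) := by
    simp only [Finset.mem_image]
    rintro ⟨p, hp, hp1⟩
    have := psums_pos hk1p hp
    omega
  have hps' : psums (1 :: lt) = Icc 1 (((j + 2) :: ks).sum - 1) \ psums ((j + 2) :: ks) := hps
  rw [psums_cons 1 lt hlt_ne, hshift,
    Icc_shift (show 1 ≤ ((j + 2) :: ks).sum - 1 by omega),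
    Finset.insert_sdiff_of_notMem _ hnot1,
    ← Finset.image_sdiff _ _ add_one_inj] at hps'
  have h1 : (1 : ℕ) ∉ (psums lt).image (fun p => p + 1) := by
    simp only [Finset.mem_image]
    rintro ⟨p, hp, hp1⟩
    have := psums_pos (fun x hx => hlp x (List.mem_cons_of_mem _ hx)) hp
    omega
  have h2 : (1 : ℕ) ∉ ((Icc 1 (((j + 2) :: ks).sum - 1 - 1) \ psums ((j + 1) :: ks)).image
      (fun p => p + 1)) := by
    simp only [Finset.mem_image, Finset.mem_sdiff, Finset.mem_Icc]
    rintro ⟨p, ⟨⟨hp1, _⟩, _⟩, hp2⟩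
    omega
  have him := congrArg (fun s => Finset.erase s 1) hps'
  rw [Finset.erase_insert h1, Finset.erase_insert h2] at him
  have hQ := Finset.image_injective add_one_inj him
  rw [hQ]
  have e1 : ((j + 1) :: ks).sum = j + 1 + ks.sum := by simp [List.sum_cons]
  congr 2
  omega

lemma Hd_one_cons (ks : List ℕ) (hks : ks ≠ []) (l : List ℕ) (h : IsHoffmanDual (1 :: ks) l) :
    ∃ t lt, l = (t + 1) :: lt ∧ 1 ≤ t ∧ IsHoffmanDual ks (t :: lt) := by
  obtain ⟨hk, hl, hkp, hlp, hsum, hps⟩ := h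
  have hksp : ∀ x ∈ ks, 0 < x := fun x hx => hkp x (List.mem_cons_of_mem _ hx)
  have hks1 : 1 ≤ ks.sum := sum_pos' hks hksp
  have hw2 : (1 :: ks).sum = 1 + ks.sum := by simp [List.sum_cons]
  have hQ : psums l = (Icc 1 ((1 :: ks).sum - 2) \ psums ks).image (fun p => p + 1) := by
    rw [hps, psums_cons 1 ks hks]
    ext x
    simp only [Finset.mem_sdiff, Finset.mem_Icc, Finset.mem_insert, Finset.mem_image]
    constructor
    · rintro ⟨⟨hx1, hx2⟩, hx3⟩
      push_neg at hx3
      refine ⟨x - 1, ⟨⟨by omega, by omega⟩, ?_⟩, by omega⟩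
      intro hmem
      exact absurd (by omega : x - 1 + 1 = x) (hx3.2 (x - 1) hmem)
    · rintro ⟨p, ⟨⟨hp1, hp2⟩, hp3⟩, rfl⟩
      refine ⟨⟨by omega, by omega⟩, ?_⟩
      rintro (h1 | ⟨r, hr, hr1⟩)
      · omega
      · have : r = p := by omega
        subst this
        exact hp3 hr
  rcases l with _ | ⟨b, lt⟩
  · exact absurd rfl hl
  have hb2 : 2 ≤ b := by
    rcases eq_or_ne lt [] with rfl | hne
    · simp only [List.sum_cons, List.sum_nil] at hsum
      omega
    · have hbmem : b ∈ psums (b :: lt) := by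
        rw [psums_cons b lt hne]; simp
      rw [hQ] at hbmem
      simp only [Finset.mem_image, Finset.mem_sdiff, Finset.mem_Icc] at hbmem
      obtain ⟨p, ⟨⟨hp1, _⟩, _⟩, hp⟩ := hbmem
      omega
  obtain ⟨t, rfl⟩ : ∃ t, b = t + 1 := ⟨b - 1, by omega⟩
  have ht : 1 ≤ t := by omega
  have hsum' : ks.sum = (t :: lt).sum := by
    simp only [List.sum_cons] at hsum ⊢
    omega
  refine ⟨t, lt, rfl, ht, hks, by simp, hksp, ?_, hsum', ?_⟩
  · intro x hx
    rcases List.mem_cons.mp hx with rfl | hx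
    · omega
    · exact hlp x (List.mem_cons_of_mem _ hx)
  · have hshift : psums ((t + 1) :: lt) = (psums (t :: lt)).image (fun p => p + 1) :=
      psums_shift t lt
    rw [hshift] at hQ
    have := Finset.image_injective add_one_inj hQ
    rw [this]
    congr 2
    omega

noncomputable def Rsum (l : List ℕ) (n : ℕ) : ℝ :=
  match l with
  | [] => 0
  | j :: lt => q ^ n / qint q n ^ j * nst N (uZ q) lt (fun _ => 1) n

lemma C2 (hq0 : 0 < q) (hq1 : q < 1) :
    ∀ (W : ℕ) (k l : List ℕ), k.sum ≤ W → IsHoffmanDual k l →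
      ∀ n, 1 ≤ n → n ≤ N →
        q ^ n * Mf q N k (fun _ => 1) n = Rsum q N l n := by
  intro W
  induction W with
  | zero =>
    intro k l hs hd n _ _
    have := sum_pos' hd.1 hd.2.2.1
    omega
  | succ W ih =>
    intro k l hs hd n hn1 hnN
    rcases k with _ | ⟨a, ks⟩
    · exact absurd rfl hd.1
    rcases a with _ | a
    · exact absurd (hd.2.2.1 0 (by simp)) (lt_irrefl 0)
    rcases a with _ | a
    · -- head = 1
      simp only [Nat.zero_add] at hs hd ⊢
      rcases eq_or_ne ks [] with rfl | hne
      · -- k = [1]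
        have hl := Hd_one hd
        subst hl
        have e1 : Mf q N [1] (fun _ => 1) n = (1 / qint q n) * 1 := by
          show (1 / qint q n) * ((SB q N)^[1 - 1] (Mf q N [] (fun _ => 1)) n) = _
          norm_num [Mf]
        rw [e1]
        show _ = q ^ n / qint q n ^ 1 * nst N (uZ q) [] (fun _ => 1) n
        show _ = q ^ n / qint q n ^ 1 * 1
        rw [pow_one]
        ring
      · obtain ⟨t, lt, rfl, ht, hd'⟩ := Hd_one_cons ks hne l hd
        have hih := ih ks (t :: lt)
          (by
            have h1 : (1 :: ks).sum = 1 + ks.sum := by simp [List.sum_cons]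
            omega) hd' n hn1 hnN
        have e1 : Mf q N (1 :: ks) (fun _ => 1) n
            = (1 / qint q n) * Mf q N ks (fun _ => 1) n := by
          show (1 / qint q n) * ((SB q N)^[1 - 1] (Mf q N ks (fun _ => 1)) n) = _
          norm_num
        rw [e1]
        show _ = q ^ n / qint q n ^ (t + 1) * nst N (uZ q) lt (fun _ => 1) n
        have e2 : q ^ n * Mf q N ks (fun _ => 1) n
            = q ^ n / qint q n ^ t * nst N (uZ q) lt (fun _ => 1) n := hih
        calc q ^ n * (1 / qint q n * Mf q N ks (fun _ => 1) n)
            = 1 / qint q n * (q ^ n * Mf q N ks (fun _ => 1) n) := by ring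
          _ = 1 / qint q n * (q ^ n / qint q n ^ t * nst N (uZ q) lt (fun _ => 1) n) := by
              rw [e2]
          _ = q ^ n / qint q n ^ (t + 1) * nst N (uZ q) lt (fun _ => 1) n := by
              rw [pow_succ]; ring
    · -- head = a + 2
      obtain ⟨lt, rfl, hd'⟩ := Hd_big a ks l hd
      have hih : ∀ x, 1 ≤ x → x ≤ N →
          q ^ x * Mf q N ((a + 1) :: ks) (fun _ => 1) x = Rsum q N lt x := by
        intro x hx1 hx2
        refine ih ((a + 1) :: ks) lt ?_ hd' x hx1 hx2
        have h1 : ((a + 1 + 1) :: ks).sum = a + 1 + 1 + ks.sum := by simp [List.sum_cons]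
        have h2 : ((a + 1) :: ks).sum = a + 1 + ks.sum := by simp [List.sum_cons]
        omega
      obtain ⟨d, dt, rfl⟩ : ∃ d dt, lt = d :: dt := by
        rcases lt with _ | ⟨d, dt⟩
        · exact absurd rfl hd'.2.1
        · exact ⟨d, dt, rfl⟩
      have e1 : Mf q N ((a + 1 + 1) :: ks) (fun _ => 1) n
          = (1 / qint q n) * (SB q N ((SB q N)^[a] (Mf q N ks (fun _ => 1))) n) := by
        show (1 / qint q n) * ((SB q N)^[a + 1 + 1 - 1] (Mf q N ks (fun _ => 1)) n) = _
        rw [show (a + 1 + 1 - 1 : ℕ) = a + 1 from by omega, Function.iterate_succ_apply']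
      rw [e1]
      have e2 : SB q N ((SB q N)^[a] (Mf q N ks (fun _ => 1))) n
          = nst N (uZ q) (d :: dt) (fun _ => 1) n := by
        show (∑ x ∈ Icc n N, (q ^ x / qint q x) * ((SB q N)^[a] (Mf q N ks (fun _ => 1)) x))
            = ∑ x ∈ Icc n N, uZ q d x * nst N (uZ q) dt (fun _ => 1) x
        refine Finset.sum_congr rfl fun x hx => ?_
        simp only [Finset.mem_Icc] at hx
        have hx1 : 1 ≤ x := le_trans hn1 hx.1
        have hthis := hih x hx1 hx.2
        have e3 : Mf q N ((a + 1) :: ks) (fun _ => 1) x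
            = (1 / qint q x) * ((SB q N)^[a] (Mf q N ks (fun _ => 1)) x) := by
          show (1 / qint q x) * ((SB q N)^[a + 1 - 1] (Mf q N ks (fun _ => 1)) x) = _
          norm_num
        rw [e3] at hthis
        have hthis' : q ^ x * (1 / qint q x * ((SB q N)^[a] (Mf q N ks (fun _ => 1)) x))
            = q ^ x / qint q x ^ d * nst N (uZ q) dt (fun _ => 1) x := hthis
        show (q ^ x / qint q x) * ((SB q N)^[a] (Mf q N ks (fun _ => 1)) x)
            = q ^ x / qint q x ^ d * nst N (uZ q) dt (fun _ => 1) x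
        rw [← hthis']
        ring
      rw [e2]
      show q ^ n * (1 / qint q n * nst N (uZ q) (d :: dt) (fun _ => 1) n)
          = q ^ n / qint q n ^ 1 * nst N (uZ q) (d :: dt) (fun _ => 1) n
      rw [pow_one]
      ring

end BradleyAux

theorem bradley_q_duality (q : ℝ) (hq0 : 0 < q) (hq1 : q < 1) (N : ℕ) (hN : 0 < N)
    (k l : List ℕ) (h : IsHoffmanDual k l) :
    qHstar q N k = qzetaStar q N l := by
  rcases k with _ | ⟨j, ks⟩
  · exact absurd rfl h.1
  rcases l with _ | ⟨c, lt⟩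
  · exact absurd rfl h.2.1
  have hN1 : (1 : ℕ) ≤ N := hN
  rw [qHstar_eq q N j ks, qzetaStar_eq q N c lt]
  have hcongr : nst N (uH q) (j :: ks) (Abdy q N) 1
      = nst N (uH q) (j :: ks) (Trf q N (fun _ => 1)) 1 := by
    refine nst_congr N (uH q) (j :: ks) _ _ ?_ 1 le_rfl hN1
    intro x hx1 hx2
    show Abdy q N x = ∑ n ∈ Icc 1 N, Cc q x n * 1
    simp only [mul_one]
    exact (L3 q N hq0 hq1 x hx1 hx2).symm
  rw [hcongr]
  rw [C1 q N hq0 hq1 (j :: ks) h.2.2.1 (fun _ => 1) 1 le_rfl hN1]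
  show (∑ n ∈ Icc 1 N, Cc q 1 n * Mf q N (j :: ks) (fun _ => 1) n)
      = ∑ x ∈ Icc 1 N, uZ q c x * nst N (uZ q) lt (fun _ => 1) x
  refine Finset.sum_congr rfl fun n hn => ?_
  simp only [Finset.mem_Icc] at hn
  rw [Cc_one q hq0 hq1 hn.1]
  rw [C2 q N hq0 hq1 ((j :: ks).sum) (j :: ks) (c :: lt) le_rfl h n hn.1 hn.2]
  rfl
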